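/- Let n > k > 1 and let p > 2 be a prime not dividing n. Set X = (Z/p)^n. Then there exist independent X-valued random variables ξ_1,…,ξ_n with distributions μ_i that are not idempotent (μ_i ∉ I(X)), and automorphisms α_{ij} ∈ Aut(X) (i = 1,…,n, j = 1,…,k), such that the k linear forms L_j = Σ_{i=1}^n α_{ij} ξ_i, j = 1,…,k, are independent. -/

import Mathlib

/-- A probability distribution on a finite set, given by its mass function. -/
def IsDist {X : Type*} [Fintype X] (μ : X → ℝ) : Prop :=
  (∀ x, 0 ≤ μ x) ∧ ∑ x, μ x = 1

/-- The characteristic function `μ̂(y) = ∑_x (x,y) μ({x})` of a distribution `μ`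
on a finite abelian group `X`, where `y` is a character of `X`. -/
noncomputable def charFun {X : Type*} [AddCommGroup X] [Fintype X]
    (μ : X → ℝ) (y : AddChar X ℂ) : ℂ :=
  ∑ x, (μ x : ℂ) * y x

/-- The Haar (uniform) distribution `m_K` on a subgroup `K` of `X`. -/
noncomputable def haarDist {X : Type*} [AddCommGroup X] [Fintype X]
    (K : AddSubgroup X) : X → ℝ :=
  (K : Set X).indicator fun _ => ((Nat.card K : ℝ))⁻¹

/-- The degenerate distribution `E_{x₀}` concentrated at `x₀`. -/
def diracDist {X : Type*} [DecidableEq X] (x₀ : X) : X → ℝ :=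
  fun x => if x = x₀ then 1 else 0

/-- Convolution of two distributions on a finite abelian group. -/
noncomputable def convDist {X : Type*} [AddCommGroup X] [Fintype X]
    (μ ν : X → ℝ) : X → ℝ :=
  fun x => ∑ t, μ t * ν (x - t)

/-- `μ` is an idempotent distribution: a shift of the Haar distribution on a subgroup. -/
noncomputable def IsIdempotent {X : Type*} [AddCommGroup X] [Fintype X] [DecidableEq X]
    (μ : X → ℝ) : Prop :=
  ∃ (K : AddSubgroup X) (x₀ : X), μ = convDist (haarDist K) (diracDist x₀)

/-- The linear forms `L_j = ∑_i A i j (ξ i)`, `j = 1,…,k`, of independent random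
variables `ξ i` with distributions `μ i` are independent: the joint distribution of
`(L_1, …, L_k)` equals the product of the marginal distributions. -/
def FormsIndep {X : Type*} [AddCommGroup X] [Fintype X] [DecidableEq X] {n k : ℕ}
    (μ : Fin n → X → ℝ) (A : Fin n → Fin k → X → X) : Prop :=
  ∀ x : Fin k → X,
    (∑ t : Fin n → X, if (∀ j, ∑ i, A i j (t i) = x j) then ∏ i, μ i (t i) else 0) =
    ∏ j, ∑ t : Fin n → X, if (∑ i, A i j (t i) = x j) then ∏ i, μ i (t i) else 0

/-- The adjoint `α̃` of an endomorphism `α` of `X`, acting on the character group: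
`(α x, y) = (x, α̃ y)`. -/
noncomputable def adjChar {X : Type*} [AddCommGroup X] (α : X →+ X)
    (y : AddChar X ℂ) : AddChar X ℂ :=
  y.compAddMonoidHom α

namespace Stmt14Aux

open Finset

lemma sum_comp_surj {G H : Type*} [AddCommGroup G] [AddCommGroup H] [Fintype G] [Fintype H]
    [DecidableEq H] (φ : G →+ H) (hφ : Function.Surjective φ) (F : H → ℝ) :
    ∑ g, F (φ g) = ((Fintype.card G : ℝ) / (Fintype.card H : ℝ)) * ∑ h, F h := by
  classical
  have hker : ∀ h : H, (Finset.univ.filter (fun g => φ g = h)).card = Fintype.card φ.ker := by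
    intro h
    obtain ⟨g0, hg0⟩ := hφ h
    rw [← Fintype.card_subtype]
    refine Fintype.card_congr ?_
    refine ⟨fun g => ⟨g.1 - g0, ?_⟩, fun x => ⟨x.1 + g0, ?_⟩, ?_, ?_⟩
    · simp [AddMonoidHom.mem_ker, map_sub, g.2, hg0]
    · have hx := x.2
      simp only [AddMonoidHom.mem_ker] at hx
      simp [map_add, hx, hg0]
    · intro g; ext; simp
    · intro x; ext; simp
  have hcard : Fintype.card G = Fintype.card H * Fintype.card φ.ker := by
    have h := Finset.card_eq_sum_card_fiberwise
      (s := (univ : Finset G)) (t := (univ : Finset H)) (f := fun g => φ g)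
      (fun x _ => mem_univ _)
    simp only [hker, Finset.sum_const, Finset.card_univ, smul_eq_mul] at h
    simpa [Finset.card_univ] using h
  have hH0 : (0:ℝ) < (Fintype.card H : ℝ) := by
    exact_mod_cast Fintype.card_pos_iff.mpr ⟨0⟩
  calc ∑ g, F (φ g)
      = ∑ g : G, ∑ h : H, if φ g = h then F h else 0 := by
        refine Finset.sum_congr rfl fun g _ => ?_
        rw [Fintype.sum_ite_eq (φ g) F]
    _ = ∑ h : H, ∑ g : G, if φ g = h then F h else 0 := Finset.sum_comm
    _ = ∑ h : H, ((univ.filter fun g => φ g = h).card : ℝ) * F h := by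
        refine Finset.sum_congr rfl fun h _ => ?_
        rw [Finset.sum_ite, Finset.sum_const_zero, add_zero, Finset.sum_const, nsmul_eq_mul]
    _ = ∑ h : H, ((Fintype.card G : ℝ)/(Fintype.card H : ℝ)) * F h := by
        refine Finset.sum_congr rfl fun h _ => ?_
        congr 1
        rw [hker h, eq_div_iff hH0.ne']
        exact_mod_cast (by rw [hcard]; ring :
          Fintype.card φ.ker * Fintype.card H = Fintype.card G)
    _ = _ := by rw [← Finset.mul_sum]

noncomputable def ww (p : ℕ) : ZMod p → ℝ :=
  fun z => (if z = 0 then 2/3 else 0) + (if z = 1 then 1/3 else 0)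

lemma ww_nonneg (p : ℕ) (z : ZMod p) : 0 ≤ ww p z := by
  unfold ww; split_ifs <;> norm_num

lemma zero_ne_one' (p : ℕ) [Fact p.Prime] (hp2 : 2 < p) : (0 : ZMod p) ≠ 1 := by
  intro h
  have : ((1:ℕ) : ZMod p) = 0 := by simpa using h.symm
  rw [ZMod.natCast_eq_zero_iff] at this
  have := Nat.le_of_dvd (by norm_num) this
  omega

lemma ww_zero (p : ℕ) [Fact p.Prime] (hp2 : 2 < p) : ww p 0 = 2/3 := by
  unfold ww
  rw [if_pos rfl, if_neg (zero_ne_one' p hp2)]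
  norm_num

lemma ww_one (p : ℕ) [Fact p.Prime] (hp2 : 2 < p) : ww p 1 = 1/3 := by
  unfold ww
  rw [if_neg (fun h => (zero_ne_one' p hp2) h.symm), if_pos rfl]
  norm_num

lemma ww_sum (p : ℕ) [Fact p.Prime] : ∑ a : ZMod p, ww p a = 1 := by
  unfold ww
  rw [Finset.sum_add_distrib, Fintype.sum_ite_eq' (0 : ZMod p) (fun _ => (2:ℝ)/3),
    Fintype.sum_ite_eq' (1 : ZMod p) (fun _ => (1:ℝ)/3)]
  norm_num

lemma two_ne' (p : ℕ) [Fact p.Prime] (hp2 : 2 < p) : (2 : ZMod p) ≠ 0 := by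
  intro h
  have : ((2:ℕ) : ZMod p) = 0 := by exact_mod_cast h
  rw [ZMod.natCast_eq_zero_iff] at this
  have := Nat.le_of_dvd (by norm_num) this
  omega

noncomputable def dbl (p n : ℕ) [Fact p.Prime] (hp2 : 2 < p) :
    (Fin n → ZMod p) ≃+ (Fin n → ZMod p) where
  toFun x := (2 : ZMod p) • x
  invFun x := (2 : ZMod p)⁻¹ • x
  left_inv x := by
    show (2:ZMod p)⁻¹ • (2:ZMod p) • x = x
    rw [smul_smul, inv_mul_cancel₀ (two_ne' p hp2), one_smul]
  right_inv x := by
    show (2:ZMod p) • (2:ZMod p)⁻¹ • x = x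
    rw [smul_smul, mul_inv_cancel₀ (two_ne' p hp2), one_smul]
  map_add' x y := smul_add _ x y

lemma conv_dirac {X : Type*} [AddCommGroup X] [Fintype X] [DecidableEq X]
    (ν : X → ℝ) (x0 v : X) : convDist ν (diracDist x0) v = ν (v - x0) := by
  unfold convDist diracDist
  have h : ∀ t : X, ν t * (if v - t = x0 then (1:ℝ) else 0)
      = if t = v - x0 then ν t else 0 := by
    intro t
    by_cases h : t = v - x0
    · subst h; rw [if_pos rfl, if_pos (by abel), mul_one]
    · rw [if_neg h, if_neg, mul_zero]
      intro hc
      exact h (by rw [← hc]; abel)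
  simp_rw [h]
  rw [Fintype.sum_ite_eq' (v - x0) ν]

lemma eqform (p n k : ℕ) [Fact p.Prime] (hp2 : 2 < p) (hkn : k < n)
    (t : Fin n → Fin n → ZMod p) (j : Fin k) :
    ∑ i : Fin n, (if (i:ℕ) = (j:ℕ) then dbl p n hp2 else AddEquiv.refl _) (t i)
      = (∑ i, t i) + t (Fin.castLE hkn.le j) := by
  have key : ∀ i : Fin n,
      ((if (i:ℕ) = (j:ℕ) then dbl p n hp2 else AddEquiv.refl _) : _ ≃+ _) (t i)
        = t i + (if i = Fin.castLE hkn.le j then t i else 0) := by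
    intro i
    by_cases h : (i:ℕ) = (j:ℕ)
    · rw [if_pos h, if_pos (Fin.ext (by simp [Fin.coe_castLE, h]))]
      show (2:ZMod p) • (t i) = _
      rw [two_smul]
    · rw [if_neg h, if_neg (fun hi => h (by rw [hi, Fin.coe_castLE]))]
      simp
  rw [Finset.sum_congr rfl (fun i _ => key i), Finset.sum_add_distrib,
    Fintype.sum_ite_eq' (Fin.castLE hkn.le j) t]

lemma sum_ind (p n : ℕ) [Fact p.Prime] {Y : Type*} [Fintype Y] [DecidableEq Y]
    (y0 : Y) (r : ℝ) :
    ∑ yz : Y × (Fin n → ZMod p),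
      (if yz.1 = y0 then (1:ℝ) else 0) * (r * ∏ i, ww p (yz.2 i)) = r := by
  rw [Fintype.sum_prod_type]
  have hz : ∑ zz : Fin n → ZMod p, ∏ i, ww p (zz i) = 1 := by
    rw [← Fintype.prod_sum]
    simp [ww_sum]
  have hy : ∀ y : Y, ∑ zz : Fin n → ZMod p,
      (if y = y0 then (1:ℝ) else 0) * (r * ∏ i, ww p (zz i))
        = (if y = y0 then (1:ℝ) else 0) * r := by
    intro y
    rw [← Finset.mul_sum, ← Finset.mul_sum, hz, mul_one]
  rw [Finset.sum_congr rfl (fun y _ => hy y), ← Finset.sum_mul,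
    Fintype.sum_ite_eq' y0 (fun _ => (1:ℝ)), one_mul]

lemma surjPhi (p n k : ℕ) [Fact p.Prime] (hk : 0 < k) (hkn : k < n) (hpn : ¬ p ∣ n)
    (x : Fin k → (Fin n → ZMod p)) (z : Fin n → ZMod p) :
    ∃ t : Fin n → (Fin n → ZMod p),
      (∀ j : Fin k, (∑ i, t i) + t (Fin.castLE hkn.le j) = x j) ∧ (∀ i, t i i = z i) := by
  classical
  have hn1 : n - 1 < n := by omega
  set last : Fin n := ⟨n - 1, hn1⟩ with hlastdef
  set e : Fin n → Fin n → ZMod p := fun a b => if b = a then 1 else 0 with he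
  have he_self : ∀ a, e a a = 1 := fun a => if_pos rfl
  have he_ne : ∀ a b, b ≠ a → e a b = 0 := fun a b h => if_neg h
  set S₁ : Fin n → ZMod p := fun a => if h : (a : ℕ) < k then x ⟨a, h⟩ a - z a else 0 with hS₁
  set t' : ZMod p → ZMod p → Fin n → Fin n → ZMod p := fun u lam i =>
    if h : (i : ℕ) < k then x ⟨i, h⟩ - (S₁ + u • e last)
    else z i • e i + (if (i : ℕ) = k then lam • e last else 0) with ht'
  set T : ZMod p → ZMod p → ZMod p := fun u lam =>
    (S₁ + u • e last) last - (∑ m ∈ Finset.univ.erase last, t' u lam m) last with hT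
  obtain ⟨u, lam, hul⟩ : ∃ u lam, T u lam = z last := by
    by_cases hcase : k + 1 < n
    · set kfin : Fin n := ⟨k, by omega⟩ with hkfin
      have hkne : kfin ≠ last := Fin.ne_of_val_ne (by simp [hkfin, hlastdef]; omega)
      have hTa : ∀ lam : ZMod p, T 0 lam = T 0 0 - lam := by
        intro lam
        have hdiff : ∀ m : Fin n, t' 0 lam m
            = t' 0 0 m + (if m = kfin then lam • e last else 0) := by
          intro m
          by_cases h : (m:ℕ) < k
          · have hm : m ≠ kfin := by
              intro hm
              rw [hm] at h
              simp [hkfin] at h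
            simp only [ht', dif_pos h, if_neg hm, add_zero]
          · by_cases h2 : (m:ℕ) = k
            · have hm : m = kfin := Fin.ext (by simpa [hkfin] using h2)
              simp only [ht', dif_neg h, if_pos h2, if_pos hm, zero_smul, add_zero]
            · have hm : m ≠ kfin := fun hm => h2 (by rw [hm])
              simp only [ht', dif_neg h, if_neg h2, if_neg hm, add_zero]
        have hsum : ∑ m ∈ univ.erase last, t' 0 lam m
            = (∑ m ∈ univ.erase last, t' 0 0 m) + lam • e last := by
          rw [Finset.sum_congr rfl (fun m _ => hdiff m), Finset.sum_add_distrib]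
          congr 1
          rw [Finset.sum_ite_eq' (univ.erase last) kfin (fun _ => lam • e last),
            if_pos (Finset.mem_erase.mpr ⟨hkne, mem_univ _⟩)]
        simp only [hT, hsum, Pi.add_apply, Pi.smul_apply, he_self, smul_eq_mul, mul_one]
        ring
      refine ⟨0, T 0 0 - z last, ?_⟩
      rw [hTa]; ring
    · have hkeq : (k:ℕ) = n - 1 := by omega
      have hmem : ∀ m ∈ univ.erase last, (m:ℕ) < k := by
        intro m hm
        have h1 : m ≠ last := (Finset.mem_erase.mp hm).1
        have h2 : (m:ℕ) ≠ n - 1 := fun hv => h1 (Fin.ext (by simp [hlastdef, hv]))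
        have := m.isLt
        omega
      have hn0 : (n : ZMod p) ≠ 0 := by
        rw [Ne, ZMod.natCast_eq_zero_iff]
        exact hpn
      have hTB : ∀ u0 : ZMod p, T u0 0 = T 0 0 + (n : ZMod p) * u0 := by
        intro u0
        have hdiffB : ∀ m ∈ univ.erase last, t' u0 0 m = t' 0 0 m - u0 • e last := by
          intro m hm
          have h := hmem m hm
          simp only [ht', dif_pos h, zero_smul, add_zero]
          abel
        have hsumB : ∑ m ∈ univ.erase last, t' u0 0 m
            = (∑ m ∈ univ.erase last, t' 0 0 m) - (n - 1) • (u0 • e last) := by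
          rw [Finset.sum_congr rfl hdiffB, Finset.sum_sub_distrib, Finset.sum_const,
            Finset.card_erase_of_mem (mem_univ _), Finset.card_univ, Fintype.card_fin]
        have hc : ((n - 1 : ℕ) : ZMod p) = (n : ZMod p) - 1 := by
          have h1 : (1:ℕ) ≤ n := by omega
          push_cast [Nat.cast_sub h1]
          ring
        simp only [hT, hsumB, Pi.add_apply, Pi.sub_apply, Pi.smul_apply, Pi.mul_apply,
          Pi.natCast_apply, he_self, smul_eq_mul, mul_one, nsmul_eq_mul, zero_smul, zero_mul,
          add_zero, hc]
        ring
      refine ⟨(n : ZMod p)⁻¹ * (z last - T 0 0), 0, ?_⟩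
      rw [hTB, ← mul_assoc, mul_inv_cancel₀ hn0, one_mul]
      ring
  set tt : Fin n → Fin n → ZMod p := fun i =>
    if i = last then (S₁ + u • e last) - ∑ m ∈ univ.erase last, t' u lam m
    else t' u lam i with htt
  have htt_last : tt last = (S₁ + u • e last) - ∑ m ∈ univ.erase last, t' u lam m := by
    simp only [htt, if_pos rfl]
  have htt_ne : ∀ i, i ≠ last → tt i = t' u lam i := by
    intro i hi
    simp only [htt, if_neg hi]
  have hsumt : ∑ i, tt i = S₁ + u • e last := by
    rw [← Finset.add_sum_erase _ _ (mem_univ last)]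
    have h2 : ∑ m ∈ univ.erase last, tt m = ∑ m ∈ univ.erase last, t' u lam m :=
      Finset.sum_congr rfl fun m hm => htt_ne m (Finset.mem_erase.mp hm).1
    rw [h2, htt_last, sub_add_cancel]
  have hc2 : ∀ j : Fin k, tt (Fin.castLE hkn.le j) = x j - (S₁ + u • e last) := by
    intro j
    have hjk : ((Fin.castLE hkn.le j : Fin n) : ℕ) < k := j.isLt
    have hne : Fin.castLE hkn.le j ≠ last := by
      refine Fin.ne_of_val_ne ?_
      simp only [Fin.coe_castLE, hlastdef]
      omega
    rw [htt_ne _ hne]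
    simp only [ht', dif_pos hjk]
    congr 1
  refine ⟨tt, ?_, ?_⟩
  · intro j
    rw [hsumt, hc2 j]
    abel
  · intro i
    by_cases hi : i = last
    · subst hi
      rw [htt_last, Pi.sub_apply, ← hul, hT]
    · rw [htt_ne i hi]
      simp only [ht']
      by_cases h : (i:ℕ) < k
      · rw [dif_pos h]
        simp only [Pi.sub_apply, Pi.add_apply, Pi.smul_apply, smul_eq_mul]
        rw [he_ne last i hi, hS₁]
        simp only [dif_pos h]
        ring
      · rw [dif_neg h]
        simp only [Pi.add_apply, Pi.smul_apply, smul_eq_mul, he_self]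
        by_cases h2 : (i:ℕ) = k
        · rw [if_pos h2]
          simp [Pi.smul_apply, he_ne last i hi]
        · rw [if_neg h2]
          simp

end Stmt14Aux

/-- Theorem 2: for `n > k > 1` and a prime `p > 2` with `p ∤ n`, on
`X = (ℤ/p)^n` there exist independent random variables `ξ_i` with non-idempotent
distributions `μ_i` and automorphisms `α_{ij} ∈ Aut(X)` such that the `k` linear forms
`L_j = ∑_i α_{ij} ξ_i` are independent. -/
theorem stmt14 (n k p : ℕ) (hk : 1 < k) (hkn : k < n)
    [Fact p.Prime] (hp2 : 2 < p) (hpn : ¬ p ∣ n) :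
    ∃ (μ : Fin n → (Fin n → ZMod p) → ℝ)
      (α : Fin n → Fin k → ((Fin n → ZMod p) ≃+ (Fin n → ZMod p))),
      (∀ i, IsDist (μ i)) ∧
      (∀ i, ¬ IsIdempotent (μ i)) ∧
      FormsIndep μ (fun i j => ⇑(α i j)) := by
  classical
  have hp : p.Prime := Fact.out
  have hq0 : (0:ℝ) < (p:ℝ) := by exact_mod_cast hp.pos
  have hn1 : 1 ≤ n := by omega
  refine ⟨fun i x => (((p:ℝ) ^ (n-1))⁻¹ * Stmt14Aux.ww p (x i)),
    fun i j => if (i:ℕ) = (j:ℕ) then Stmt14Aux.dbl p n hp2 else AddEquiv.refl _, ?_, ?_, ?_⟩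
  · -- IsDist
    intro i
    constructor
    · intro xx
      exact mul_nonneg (by positivity) (Stmt14Aux.ww_nonneg p _)
    · rw [← Finset.mul_sum]
      have hsurj : Function.Surjective (Pi.evalAddMonoidHom (fun _ : Fin n => ZMod p) i) :=
        fun zz => ⟨fun _ => zz, rfl⟩
      have hs := Stmt14Aux.sum_comp_surj (Pi.evalAddMonoidHom (fun _ : Fin n => ZMod p) i)
        hsurj (Stmt14Aux.ww p)
      simp only [Pi.evalAddMonoidHom_apply] at hs
      rw [hs, Stmt14Aux.ww_sum p, mul_one]
      have hcard1 : (Fintype.card (Fin n → ZMod p) : ℝ) = (p:ℝ)^n := by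
        rw [Fintype.card_fun, ZMod.card, Fintype.card_fin]
        push_cast
        ring
      have hcard2 : (Fintype.card (ZMod p) : ℝ) = (p:ℝ) := by
        rw [ZMod.card]
      rw [hcard1, hcard2]
      have hdiv : (p:ℝ)^n / (p:ℝ) = (p:ℝ)^(n-1) := by
        rw [pow_sub₀ _ hq0.ne' hn1, pow_one, div_eq_mul_inv]
      rw [hdiv, inv_mul_cancel₀ (by positivity)]
  · -- not idempotent
    intro i
    rintro ⟨K, x0, hEq⟩
    have h1' : ((p:ℝ)^(n-1))⁻¹ * Stmt14Aux.ww p 0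
        = convDist (haarDist K) (diracDist x0) (fun _ => (0:ZMod p)) :=
      congrFun hEq (fun _ => 0)
    have h2' : ((p:ℝ)^(n-1))⁻¹ * Stmt14Aux.ww p 1
        = convDist (haarDist K) (diracDist x0) (fun _ => (1:ZMod p)) :=
      congrFun hEq (fun _ => 1)
    rw [Stmt14Aux.conv_dirac] at h1' h2'
    rw [Stmt14Aux.ww_zero p hp2] at h1'
    rw [Stmt14Aux.ww_one p hp2] at h2'
    unfold haarDist at h1' h2'
    rw [Set.indicator_apply] at h1' h2'
    have hcpos : (0:ℝ) < ((p:ℝ)^(n-1))⁻¹ := by positivity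
    split_ifs at h1' h2' <;> linarith [hcpos]
  · -- FormsIndep
    intro x
    set q : ℝ := (p:ℝ) with hqdef
    set c : ℝ := (q ^ (n-1))⁻¹ with hcdef
    have hc0 : (0:ℝ) < c := by positivity
    set Φ : (Fin n → Fin n → ZMod p) →+ ((Fin k → Fin n → ZMod p) × (Fin n → ZMod p)) :=
      AddMonoidHom.mk' (fun t =>
        (fun j => (∑ i, t i) + t (Fin.castLE hkn.le j), fun i => t i i))
        (by
          intro a b
          refine Prod.ext ?_ ?_
          · funext j
            simp [Finset.sum_add_distrib]
            abel
          · funext i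
            simp) with hΦ
    have hΦs : Function.Surjective Φ := by
      rintro ⟨xx, zz⟩
      obtain ⟨t, ha, hb⟩ := Stmt14Aux.surjPhi p n k (by omega) hkn hpn xx zz
      refine ⟨t, ?_⟩
      show (fun j => (∑ i, t i) + t (Fin.castLE hkn.le j), fun i => t i i) = (xx, zz)
      simp only [Prod.mk.injEq]
      exact ⟨funext ha, funext hb⟩
    -- the two projections
    have hπs : ∀ j : Fin k, Function.Surjective
        (((Pi.evalAddMonoidHom (fun _ : Fin k => (Fin n → ZMod p)) j).comp
          (AddMonoidHom.fst _ _)).prod (AddMonoidHom.snd _ _) |>.comp Φ) := by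
      intro j
      rw [AddMonoidHom.coe_comp]
      apply Function.Surjective.comp _ hΦs
      rintro ⟨v, zz⟩
      exact ⟨(fun _ => v, zz), rfl⟩
    have hcX : (Fintype.card (Fin n → ZMod p) : ℝ) = q^n := by
      simp only [Fintype.card_fun, ZMod.card, Fintype.card_fin]
      push_cast
      ring
    have hcG : (Fintype.card (Fin n → Fin n → ZMod p) : ℝ) = (q^n)^n := by
      simp only [Fintype.card_fun, ZMod.card, Fintype.card_fin]
      push_cast
      ring
    have hcH : (Fintype.card ((Fin k → Fin n → ZMod p) × (Fin n → ZMod p)) : ℝ)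
        = (q^n)^k * q^n := by
      simp only [Fintype.card_prod, Fintype.card_fun, ZMod.card, Fintype.card_fin]
      push_cast
      ring
    have hcH2 : (Fintype.card ((Fin n → ZMod p) × (Fin n → ZMod p)) : ℝ) = q^n * q^n := by
      simp only [Fintype.card_prod, Fintype.card_fun, ZMod.card, Fintype.card_fin]
      push_cast
      ring
    have hkey : (q^n)^n * c^n = q^n := by
      have h2 : n ≤ n*n := Nat.le_mul_of_pos_left n (by omega)
      have h3 : (n-1)*n = n*n - n := by rw [Nat.sub_mul, one_mul]
      have harith : (n-1)*n + n = n*n := by omega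
      rw [hcdef, inv_pow, ← pow_mul, ← pow_mul, ← harith, pow_add]
      field_simp
    have e1 : (((q^n)^n) / ((q^n)^k * q^n)) * c^n = ((q^n)^k)⁻¹ := by
      rw [div_mul_eq_mul_div, hkey]
      field_simp
      try ring
    have e2 : (((q^n)^n) / (q^n * q^n)) * c^n = (q^n)⁻¹ := by
      rw [div_mul_eq_mul_div, hkey]
      field_simp
      try ring
    trans (((q^n)^k)⁻¹ : ℝ)
    · refine Eq.trans (b := ∑ t : Fin n → Fin n → ZMod p,
        (fun yz : (Fin k → Fin n → ZMod p) × (Fin n → ZMod p) =>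
          (if yz.1 = x then (1:ℝ) else 0) * (c^n * ∏ i, Stmt14Aux.ww p (yz.2 i))) (Φ t))
        (Finset.sum_congr rfl fun t _ => ?_) ?_
      · beta_reduce
        have hiff : (∀ j : Fin k, ∑ i : Fin n,
            (if (i:ℕ) = (j:ℕ) then Stmt14Aux.dbl p n hp2 else AddEquiv.refl _) (t i) = x j)
            ↔ ((Φ t).1 = x) := by
          constructor
          · intro h
            funext j
            show (∑ i, t i) + t (Fin.castLE hkn.le j) = x j
            rw [← Stmt14Aux.eqform p n k hp2 hkn t j]
            exact h j
          · intro h j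
            rw [Stmt14Aux.eqform p n k hp2 hkn t j]
            exact congrFun h j
        rw [if_congr hiff rfl rfl]
        by_cases hy : (Φ t).1 = x
        · rw [if_pos hy, if_pos hy, one_mul, Finset.prod_mul_distrib, Finset.prod_const,
            Finset.card_univ, Fintype.card_fin]
          rfl
        · rw [if_neg hy, if_neg hy, zero_mul]
      · refine Eq.trans (Stmt14Aux.sum_comp_surj Φ hΦs
          (fun yz : (Fin k → Fin n → ZMod p) × (Fin n → ZMod p) =>
            (if yz.1 = x then (1:ℝ) else 0) * (c^n * ∏ i, Stmt14Aux.ww p (yz.2 i)))) ?_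
        beta_reduce
        rw [Stmt14Aux.sum_ind p n x (c^n), hcG, hcH]
        exact e1
    · symm
      refine Eq.trans (b := ∏ _j : Fin k, ((q^n)⁻¹ : ℝ))
        (Finset.prod_congr rfl fun j _ => ?_) ?_
      · -- each factor equals (q^n)⁻¹
        refine Eq.trans (b := ∑ t : Fin n → Fin n → ZMod p,
          (fun yz : (Fin n → ZMod p) × (Fin n → ZMod p) =>
            (if yz.1 = x j then (1:ℝ) else 0) * (c^n * ∏ i, Stmt14Aux.ww p (yz.2 i)))
            ((((Pi.evalAddMonoidHom (fun _ : Fin k => (Fin n → ZMod p)) j).comp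
              (AddMonoidHom.fst _ _)).prod (AddMonoidHom.snd _ _)).comp Φ t))
          (Finset.sum_congr rfl fun t _ => ?_) ?_
        · beta_reduce
          have hiff : (∑ i : Fin n,
              (if (i:ℕ) = (j:ℕ) then Stmt14Aux.dbl p n hp2 else AddEquiv.refl _) (t i) = x j)
              ↔ (((((Pi.evalAddMonoidHom (fun _ : Fin k => (Fin n → ZMod p)) j).comp
                (AddMonoidHom.fst _ _)).prod (AddMonoidHom.snd _ _)).comp Φ t).1 = x j) := by
            rw [Stmt14Aux.eqform p n k hp2 hkn t j]
            exact Iff.rfl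
          rw [if_congr hiff rfl rfl]
          by_cases hy : ((((Pi.evalAddMonoidHom (fun _ : Fin k => (Fin n → ZMod p)) j).comp
              (AddMonoidHom.fst _ _)).prod (AddMonoidHom.snd _ _)).comp Φ t).1 = x j
          · rw [if_pos hy, if_pos hy, one_mul, Finset.prod_mul_distrib, Finset.prod_const,
              Finset.card_univ, Fintype.card_fin]
            rfl
          · rw [if_neg hy, if_neg hy, zero_mul]
        · refine Eq.trans (Stmt14Aux.sum_comp_surj _ (hπs j)
            (fun yz : (Fin n → ZMod p) × (Fin n → ZMod p) =>
              (if yz.1 = x j then (1:ℝ) else 0) * (c^n * ∏ i, Stmt14Aux.ww p (yz.2 i)))) ?_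
          beta_reduce
          rw [Stmt14Aux.sum_ind p n (x j) (c^n), hcG, hcH2]
          exact e2
      · rw [Finset.prod_const, Finset.card_univ, Fintype.card_fin, inv_pow]
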